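/- For $\mathfrak{p} \in (1,2]$ and real numbers $a, b$, we have $|a+b|^{\mathfrak{p}} \le |a|^{\mathfrak{p}} + \mathfrak{p}|a|^{\mathfrak{p}-1}\mathrm{sgn}(a) b + 2^{2-\mathfrak{p}}|b|^{\mathfrak{p}}$. -/

import Mathlib

open Real NNReal

-- concavity: a^α + b^α ≤ 2^(1-α) (a+b)^α
lemma nn_conc {α : ℝ} (hα0 : 0 < α) (hα1 : α ≤ 1) (a b : ℝ≥0) :
    a ^ α + b ^ α ≤ 2 ^ (1 - α) * (a + b) ^ α := by
  have hp : 1 ≤ 1 / α := (le_div_iff₀ hα0).mpr (by linarith)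
  have h := NNReal.rpow_add_le_mul_rpow_add_rpow (a ^ α) (b ^ α) hp
  rw [← NNReal.rpow_mul a, ← NNReal.rpow_mul b, mul_one_div_cancel hα0.ne', NNReal.rpow_one,
    NNReal.rpow_one] at h
  have h2 := NNReal.rpow_le_rpow h hα0.le
  rw [← NNReal.rpow_mul, one_div, inv_mul_cancel₀ hα0.ne', NNReal.rpow_one,
    NNReal.mul_rpow, ← NNReal.rpow_mul] at h2
  have e : (α⁻¹ - 1) * α = 1 - α := by field_simp
  rwa [e] at h2

lemma conc {α : ℝ} (hα0 : 0 < α) (hα1 : α ≤ 1) {a b : ℝ} (ha : 0 ≤ a) (hb : 0 ≤ b) :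
    a ^ α + b ^ α ≤ 2 ^ (1 - α) * (a + b) ^ α := by
  have h2 := nn_conc hα0 hα1 (⟨a, ha⟩ : ℝ≥0) (⟨b, hb⟩ : ℝ≥0)
  exact_mod_cast h2

lemma subadd {α : ℝ} (hα0 : 0 < α) (hα1 : α ≤ 1) {a b : ℝ} (ha : 0 ≤ a) (hb : 0 ≤ b) :
    (a + b) ^ α ≤ a ^ α + b ^ α := by
  have := NNReal.rpow_add_le_add_rpow (⟨a, ha⟩ : ℝ≥0) ⟨b, hb⟩ hα0.le hα1
  exact_mod_cast this

lemma hs {α : ℝ} (hα0 : 0 < α) {z : ℝ} (hz : 0 ≤ z) : |z| ^ (α - 1) * z = z ^ α := by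
  rcases eq_or_lt_of_le hz with h | h
  · simp [← h, Real.zero_rpow hα0.ne']
  · rw [abs_of_pos h]
    have := Real.rpow_add_one h.ne' (α - 1)
    simpa using this.symm

lemma hsneg {α : ℝ} (hα0 : 0 < α) {z : ℝ} (hz : z ≤ 0) :
    |z| ^ (α - 1) * z = -((-z) ^ α) := by
  have h := hs hα0 (neg_nonneg.mpr hz)
  rw [abs_neg] at h
  rw [← h]; ring

lemma key0 {α : ℝ} (hα0 : 0 < α) (hα1 : α ≤ 1) {x y : ℝ} (hy : 0 ≤ y) (hxy : y ≤ x) :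
    x ^ α - y ^ α ≤ (x - y) ^ α := by
  have h := subadd hα0 hα1 (sub_nonneg.mpr hxy) hy
  rw [sub_add_cancel] at h
  linarith

lemma one_le_pow {α : ℝ} (hα1 : α ≤ 1) : (1 : ℝ) ≤ 2 ^ (1 - α) :=
  Real.one_le_rpow one_le_two (by linarith)

lemma key' {α : ℝ} (hα0 : 0 < α) (hα1 : α ≤ 1) {x y : ℝ} (hxy : y ≤ x) :
    |(|x| ^ (α - 1) * x) - (|y| ^ (α - 1) * y)| ≤ 2 ^ (1 - α) * |x - y| ^ α := by
  have h2 : (0:ℝ) ≤ 2 ^ (1-α) := by positivity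
  rcases le_total 0 y with hy | hy
  · rw [hs hα0 (hy.trans hxy), hs hα0 hy,
      abs_of_nonneg (sub_nonneg.mpr (Real.rpow_le_rpow hy hxy hα0.le)),
      abs_of_nonneg (sub_nonneg.mpr hxy)]
    calc x ^ α - y ^ α ≤ (x - y) ^ α := key0 hα0 hα1 hy hxy
      _ ≤ 2 ^ (1 - α) * (x - y) ^ α :=
        le_mul_of_one_le_left (Real.rpow_nonneg (sub_nonneg.mpr hxy) α) (one_le_pow hα1)
  · rcases le_total x 0 with hx | hx
    · rw [hsneg hα0 hx, hsneg hα0 hy, abs_of_nonneg (sub_nonneg.mpr hxy)]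
      have hxy' : -x ≤ -y := neg_le_neg hxy
      have hx' : 0 ≤ -x := neg_nonneg.mpr hx
      rw [show -(-x)^α - -((-y)^α) = (-y)^α - (-x)^α by ring,
        abs_of_nonneg (sub_nonneg.mpr (Real.rpow_le_rpow hx' hxy' hα0.le))]
      calc (-y) ^ α - (-x) ^ α ≤ (-y - -x) ^ α := key0 hα0 hα1 hx' hxy'
        _ = (x - y) ^ α := by ring_nf
        _ ≤ 2 ^ (1 - α) * (x - y) ^ α :=
          le_mul_of_one_le_left (Real.rpow_nonneg (sub_nonneg.mpr hxy) α) (one_le_pow hα1)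
    · rw [hs hα0 hx, hsneg hα0 hy, sub_neg_eq_add, abs_of_nonneg (sub_nonneg.mpr hxy),
        abs_of_nonneg (add_nonneg (Real.rpow_nonneg hx α) (Real.rpow_nonneg (neg_nonneg.mpr hy) α))]
      calc x ^ α + (-y) ^ α ≤ 2 ^ (1 - α) * (x + -y) ^ α :=
          conc hα0 hα1 hx (neg_nonneg.mpr hy)
        _ = 2 ^ (1 - α) * (x - y) ^ α := by ring_nf

lemma key {α : ℝ} (hα0 : 0 < α) (hα1 : α ≤ 1) (x y : ℝ) :
    |(|x| ^ (α - 1) * x) - (|y| ^ (α - 1) * y)| ≤ 2 ^ (1 - α) * |x - y| ^ α := by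
  rcases le_total y x with h | h
  · exact key' hα0 hα1 h
  · rw [abs_sub_comm, abs_sub_comm x y]; exact key' hα0 hα1 h

theorem abs_add_rpow_ineq (p a b : ℝ) (hp1 : 1 < p) (hp2 : p ≤ 2) :
    |a + b| ^ p ≤ |a| ^ p + p * |a| ^ (p - 1) * Real.sign a * b + 2 ^ (2 - p) * |b| ^ p := by
  have hp0 : (0:ℝ) < p := by linarith
  rcases eq_or_ne b 0 with rfl | hb
  · simp [Real.zero_rpow hp0.ne']
  have hb' : |b| ≠ 0 := abs_ne_zero.mpr hb
  -- continuity of the derivative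
  have hg_cont : Continuous fun u : ℝ => p * |u| ^ (p - 2) * u := by
    have h1 := (contDiff_norm_rpow (E := ℝ) hp1).continuous_deriv le_rfl
    have h2 : deriv (fun x : ℝ => ‖x‖ ^ p) = fun u : ℝ => p * |u| ^ (p - 2) * u := by
      funext x
      rw [(hasDerivAt_norm_rpow x hp1).deriv]
      simp [Real.norm_eq_abs]
    rwa [h2] at h1
  have hderiv : ∀ t : ℝ, HasDerivAt (fun t : ℝ => |a + t * b| ^ p)
      (p * |a + t * b| ^ (p - 2) * (a + t * b) * b) t := by
    intro t
    have h2 : HasDerivAt (fun t : ℝ => a + t * b) b t := by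
      simpa using ((hasDerivAt_id t).mul_const b).const_add a
    exact (hasDerivAt_abs_rpow (a + t * b) hp1).comp t h2
  have hcont : Continuous fun t : ℝ => p * |a + t * b| ^ (p - 2) * (a + t * b) * b :=
    (hg_cont.comp (by continuity)).mul continuous_const
  have hint : IntervalIntegrable (fun t : ℝ => p * |a + t * b| ^ (p - 2) * (a + t * b) * b)
      MeasureTheory.volume 0 1 := hcont.intervalIntegrable 0 1
  have hFTC : ∫ t in (0:ℝ)..1, p * |a + t * b| ^ (p - 2) * (a + t * b) * b
      = |a + b| ^ p - |a| ^ p := by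
    have h := intervalIntegral.integral_eq_sub_of_hasDerivAt (fun t _ => hderiv t) hint
    simpa using h
  -- pointwise bound
  have hpt : ∀ t ∈ Set.Icc (0:ℝ) 1,
      p * |a + t * b| ^ (p - 2) * (a + t * b) * b - p * |a| ^ (p - 2) * a * b
        ≤ p * 2 ^ (2 - p) * t ^ (p - 1) * |b| ^ p := by
    intro t ht
    have hk := key (α := p - 1) (by linarith) (by linarith) (a + t * b) a
    rw [show p - 1 - 1 = p - 2 from by ring, show 1 - (p - 1) = 2 - p from by ring,
      show a + t * b - a = t * b from by ring] at hk
    have habs : |t * b| ^ (p - 1) = t ^ (p - 1) * |b| ^ (p - 1) := by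
      rw [abs_mul, abs_of_nonneg ht.1, Real.mul_rpow ht.1 (abs_nonneg b)]
    have hbp : |b| ^ (p - 1) * |b| = |b| ^ p := by
      have := Real.rpow_add_one hb' (p - 1)
      simpa using this.symm
    calc p * |a + t * b| ^ (p - 2) * (a + t * b) * b - p * |a| ^ (p - 2) * a * b
        = p * ((|a + t * b| ^ (p - 2) * (a + t * b)) - (|a| ^ (p - 2) * a)) * b := by ring
      _ ≤ |p * ((|a + t * b| ^ (p - 2) * (a + t * b)) - (|a| ^ (p - 2) * a)) * b| :=
          le_abs_self _
      _ = p * |(|a + t * b| ^ (p - 2) * (a + t * b)) - (|a| ^ (p - 2) * a)| * |b| := by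
          rw [abs_mul, abs_mul, abs_of_pos hp0]
      _ ≤ p * (2 ^ (2 - p) * |t * b| ^ (p - 1)) * |b| := by
          have h2 : (0:ℝ) ≤ |b| := abs_nonneg b
          gcongr
      _ = p * 2 ^ (2 - p) * t ^ (p - 1) * |b| ^ p := by
          rw [habs, ← hbp]; ring
  -- integrability of bound
  have hRHSint : IntervalIntegrable (fun t : ℝ => p * 2 ^ (2 - p) * t ^ (p - 1) * |b| ^ p)
      MeasureTheory.volume 0 1 := by
    have hc : Continuous (fun t : ℝ => p * 2 ^ (2 - p) * t ^ (p - 1) * |b| ^ p) :=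
      (continuous_const.mul
        (Real.continuous_rpow_const (by linarith : (0:ℝ) ≤ p - 1))).mul continuous_const
    exact hc.intervalIntegrable 0 1
  have hconst : IntervalIntegrable (fun _ : ℝ => p * |a| ^ (p - 2) * a * b)
      MeasureTheory.volume 0 1 := intervalIntegrable_const
  have hmono := intervalIntegral.integral_mono_on (by norm_num : (0:ℝ) ≤ 1)
    (hint.sub hconst) hRHSint hpt
  rw [intervalIntegral.integral_sub hint hconst, hFTC, intervalIntegral.integral_const] at hmono
  have hRHS : ∫ t in (0:ℝ)..1, p * 2 ^ (2 - p) * t ^ (p - 1) * |b| ^ p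
      = 2 ^ (2 - p) * |b| ^ p := by
    rw [intervalIntegral.integral_mul_const, intervalIntegral.integral_const_mul,
      integral_rpow (Or.inl (by linarith : (-1:ℝ) < p - 1))]
    rw [show p - 1 + 1 = p from by ring, Real.one_rpow, Real.zero_rpow hp0.ne']
    field_simp
    norm_num
  rw [hRHS] at hmono
  have hsign : |a| ^ (p - 2) * a = |a| ^ (p - 1) * Real.sign a := by
    rcases lt_trichotomy a 0 with h | h | h
    · rw [Real.sign_of_neg h, abs_of_neg h]
      have := Real.rpow_add_one (by linarith : -a ≠ 0) (p - 2)
      rw [show p - 2 + 1 = p - 1 from by ring] at this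
      rw [this]; ring
    · simp [h]
    · rw [Real.sign_of_pos h, abs_of_pos h]
      have := Real.rpow_add_one h.ne' (p - 2)
      rw [show p - 2 + 1 = p - 1 from by ring] at this
      rw [this]; ring
  have : p * |a| ^ (p - 2) * a * b = p * |a| ^ (p - 1) * Real.sign a * b := by
    rw [mul_assoc p, hsign]; ring
  simp only [smul_eq_mul, sub_zero, one_mul] at hmono
  linarith [hmono]
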